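/- Let B ∈ 𝓛^Lya(ℕ, ℝ^{k×k}) with lower Bohl exponent β_B(ℝ^k) ≤ −δ < 0, and let (ε_ℓ) be a decreasing null sequence of positive reals. Then there exists ((s_ℓ, τ_ℓ)) in ℕ×ℕ with τ₀ ≥ 2, τ_ℓ < s_ℓ < τ_{ℓ+1}, s_ℓ − τ_ℓ → ∞, (1/(s_ℓ − τ_ℓ)) ln(2/sin ε_ℓ) < ε_ℓ, and ‖Φ_B(τ_ℓ, s_ℓ)‖⁻¹ ≤ e^{(−δ + ε_ℓ)(s_ℓ − τ_ℓ)} for all ℓ. -/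
import Mathlib


open Real Filter

noncomputable section

variable {d : ℕ}

/-- Shorthand for `ℝ^d` with the Euclidean norm. -/
abbrev Euc (d : ℕ) := EuclideanSpace ℝ (Fin d)

/-- Forward product `fwd A m k = A(m+k−1) ⋯ A(m)` of a sequence of invertible matrices. -/
def fwd (A : ℕ → (Euc d ≃L[ℝ] Euc d)) (m : ℕ) : ℕ → (Euc d ≃L[ℝ] Euc d)
  | 0 => ContinuousLinearEquiv.refl ℝ (Euc d)
  | k + 1 => (fwd A m k).trans (A (m + k))

/-- The transition matrix `Φ_A(n,m)`: `A(n−1)⋯A(m)` for `n ≥ m`, and `Φ_A(m,n)⁻¹` for `n < m`. -/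
def Phi (A : ℕ → (Euc d ≃L[ℝ] Euc d)) (n m : ℕ) : Euc d ≃L[ℝ] Euc d :=
  if m ≤ n then fwd A m (n - m) else (fwd A n (m - n)).symm

/-- A sequence of invertible matrices is a Lyapunov sequence if it and its pointwise
inverse are bounded. -/
def IsLyapunov (A : ℕ → (Euc d ≃L[ℝ] Euc d)) : Prop :=
  (∃ C, ∀ n, ‖(A n : Euc d →L[ℝ] Euc d)‖ ≤ C) ∧
  (∃ C, ∀ n, ‖((A n).symm : Euc d →L[ℝ] Euc d)‖ ≤ C)

/-- The upper Bohl exponent `β̄_A(x₀)` of a (nonzero) vector `x₀`. -/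
def upperBohl (A : ℕ → (Euc d ≃L[ℝ] Euc d)) (x0 : Euc d) : ℝ :=
  ⨅ N : ℕ, sSup {r : ℝ | ∃ n m : ℕ, n - m > N ∧ m > N ∧
    r = ((n : ℝ) - m)⁻¹ * Real.log (‖Phi A n 0 x0‖ / ‖Phi A m 0 x0‖)}

/-- The lower Bohl exponent `β̲_A(x₀)` of a (nonzero) vector `x₀`. -/
def lowerBohl (A : ℕ → (Euc d ≃L[ℝ] Euc d)) (x0 : Euc d) : ℝ :=
  ⨆ N : ℕ, sInf {r : ℝ | ∃ n m : ℕ, n - m > N ∧ m > N ∧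
    r = ((n : ℝ) - m)⁻¹ * Real.log (‖Phi A n 0 x0‖ / ‖Phi A m 0 x0‖)}

/-- The upper Bohl exponent `β̄_A(ℝ^d)` of the full space. -/
def upperBohlFull (A : ℕ → (Euc d ≃L[ℝ] Euc d)) : ℝ :=
  ⨅ N : ℕ, sSup {r : ℝ | ∃ n m : ℕ, n - m > N ∧ m > N ∧ ∃ x0 : Euc d, x0 ≠ 0 ∧
    r = ((n : ℝ) - m)⁻¹ * Real.log (‖Phi A n 0 x0‖ / ‖Phi A m 0 x0‖)}

/-- The lower Bohl exponent `β̲_A(ℝ^d)` of the full space. -/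
def lowerBohlFull (A : ℕ → (Euc d ≃L[ℝ] Euc d)) : ℝ :=
  ⨆ N : ℕ, sInf {r : ℝ | ∃ n m : ℕ, n - m > N ∧ m > N ∧ ∃ x0 : Euc d, x0 ≠ 0 ∧
    r = ((n : ℝ) - m)⁻¹ * Real.log (‖Phi A n 0 x0‖ / ‖Phi A m 0 x0‖)}

/-- The system `x(n+1) = A(n)x(n)` has a Bohl dichotomy. -/
def BohlDichotomy (A : ℕ → (Euc d ≃L[ℝ] Euc d)) : Prop :=
  ∃ L1 L2 : Submodule ℝ (Euc d), IsCompl L1 L2 ∧ ∃ α > (0 : ℝ), ∃ C1 C2 : Euc d → ℝ,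
    (∀ x, 0 < C1 x ∧ 0 < C2 x) ∧
    (∀ x0 ∈ L1, ∀ m n : ℕ, m ≤ n →
      ‖Phi A n 0 x0‖ ≤ C1 x0 * Real.exp (-α * ((n : ℝ) - m)) * ‖Phi A m 0 x0‖) ∧
    (∀ x0 ∈ L2, ∀ m n : ℕ, m ≤ n →
      ‖Phi A n 0 x0‖ ≥ C2 x0 * Real.exp (α * ((n : ℝ) - m)) * ‖Phi A m 0 x0‖)

/-- The system `x(n+1) = A(n)x(n)` has an exponential dichotomy. -/
def ExpDichotomy (A : ℕ → (Euc d ≃L[ℝ] Euc d)) : Prop :=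
  ∃ L1 L2 : Submodule ℝ (Euc d), IsCompl L1 L2 ∧ ∃ α > (0 : ℝ), ∃ K > (0 : ℝ),
    (∀ x0 ∈ L1, ∀ m n : ℕ, m ≤ n →
      ‖Phi A n 0 x0‖ ≤ K * Real.exp (-α * ((n : ℝ) - m)) * ‖Phi A m 0 x0‖) ∧
    (∀ x0 ∈ L2, ∀ m n : ℕ, m ≤ n →
      ‖Phi A n 0 x0‖ ≥ K⁻¹ * Real.exp (α * ((n : ℝ) - m)) * ‖Phi A m 0 x0‖)


lemma fwd_add (A : ℕ → (Euc d ≃L[ℝ] Euc d)) (m a b : ℕ) :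
    fwd A m (a + b) = (fwd A m a).trans (fwd A (m + a) b) := by
  induction b with
  | zero => ext x; rfl
  | succ b ih =>
    show fwd A m ((a + b) + 1) = _
    rw [show fwd A m ((a+b)+1) = (fwd A m (a+b)).trans (A (m + (a+b))) from rfl, ih]
    ext x
    simp [fwd, Nat.add_assoc]

lemma cocycle (A : ℕ → (Euc d ≃L[ℝ] Euc d)) {m n : ℕ} (h : m ≤ n) (x : Euc d) :
    Phi A n 0 x = Phi A n m (Phi A m 0 x) := by
  unfold Phi
  rw [if_pos (Nat.zero_le m), if_pos (Nat.zero_le n), if_pos h]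
  obtain ⟨t, rfl⟩ := Nat.exists_eq_add_of_le h
  simp only [Nat.sub_zero, Nat.add_sub_cancel_left]
  rw [fwd_add A 0 m t]
  simp

lemma phi_symm (A : ℕ → (Euc d ≃L[ℝ] Euc d)) {m n : ℕ} (h : m < n) :
    Phi A m n = (Phi A n m).symm := by
  unfold Phi
  rw [if_neg (Nat.not_le.2 h), if_pos (le_of_lt h)]

def Nbd (ε : ℕ → ℝ) (ℓ prev : ℕ) : ℕ :=
  max prev (max (max 2 ℓ) ⌈Real.log (2 / Real.sin (ε ℓ)) / ε ℓ⌉₊)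

lemma Nbd_prev (ε : ℕ → ℝ) (ℓ prev : ℕ) : prev ≤ Nbd ε ℓ prev := le_max_left _ _
lemma Nbd_two (ε : ℕ → ℝ) (ℓ prev : ℕ) : 2 ≤ Nbd ε ℓ prev :=
  le_trans (le_max_left _ _) (le_trans (le_max_left _ _) (le_max_right _ _))
lemma Nbd_ell (ε : ℕ → ℝ) (ℓ prev : ℕ) : ℓ ≤ Nbd ε ℓ prev :=
  le_trans (le_max_right _ _) (le_trans (le_max_left _ _) (le_max_right _ _))
lemma Nbd_ceil (ε : ℕ → ℝ) (ℓ prev : ℕ) :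
    ⌈Real.log (2 / Real.sin (ε ℓ)) / ε ℓ⌉₊ ≤ Nbd ε ℓ prev :=
  le_trans (le_max_right _ _) (le_max_right _ _)


/-- if `B` is a Lyapunov sequence with `β̲_B(ℝ^k) ≤ −δ < 0` and `(ε_ℓ)` is a
decreasing null sequence of positive reals, then there are `((s_ℓ, τ_ℓ))` with `τ₀ ≥ 2`,
`τ_ℓ < s_ℓ < τ_{ℓ+1}`, `s_ℓ − τ_ℓ → ∞`, `(1/(s_ℓ−τ_ℓ)) ln(2/sin ε_ℓ) < ε_ℓ` and
`‖Φ_B(τ_ℓ, s_ℓ)‖⁻¹ ≤ e^{(−δ+ε_ℓ)(s_ℓ−τ_ℓ)}`. -/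
theorem exponential_decay_on_subsequence (k : ℕ)
    (B : ℕ → (Euc k ≃L[ℝ] Euc k)) (hB : IsLyapunov B)
    (δ : ℝ) (hδ : 0 < δ) (hBohl : lowerBohlFull B ≤ -δ)
    (ε : ℕ → ℝ) (hpos : ∀ ℓ, 0 < ε ℓ) (hanti : Antitone ε)
    (hlim : Tendsto ε atTop (nhds 0)) :
    ∃ s τ : ℕ → ℕ,
      2 ≤ τ 0 ∧
      (∀ ℓ, τ ℓ < s ℓ ∧ s ℓ < τ (ℓ + 1)) ∧
      Tendsto (fun ℓ => s ℓ - τ ℓ) atTop atTop ∧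
      (∀ ℓ, ((s ℓ : ℝ) - τ ℓ)⁻¹ * Real.log (2 / Real.sin (ε ℓ)) < ε ℓ) ∧
      ∀ ℓ, ‖(Phi B (τ ℓ) (s ℓ) : Euc k →L[ℝ] Euc k)‖⁻¹ ≤
        Real.exp ((-δ + ε ℓ) * ((s ℓ : ℝ) - τ ℓ)) := by
  -- Handle the trivial case where there is no nonzero vector
  by_cases hk : ∃ x0 : Euc k, x0 ≠ 0
  case neg =>
    exfalso
    have hempty : ∀ N : ℕ, {r : ℝ | ∃ n m : ℕ, n - m > N ∧ m > N ∧ ∃ x0 : Euc k, x0 ≠ 0 ∧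
        r = ((n : ℝ) - m)⁻¹ * Real.log (‖Phi B n 0 x0‖ / ‖Phi B m 0 x0‖)} = ∅ := by
      intro N
      ext r
      simp only [Set.mem_setOf_eq, Set.mem_empty_iff_false, iff_false]
      rintro ⟨n, m, _, _, x0, hx0, _⟩
      exact hk ⟨x0, hx0⟩
    have : lowerBohlFull B = 0 := by
      unfold lowerBohlFull
      simp only [hempty, Real.sInf_empty, ciSup_const]
    rw [this] at hBohl
    linarith
  obtain ⟨z0, hz0⟩ := hk
  -- Key extraction : for every N and e > 0 we find an element of S N below -δ + e
  have key : ∀ N : ℕ, ∀ e : ℝ, 0 < e → ∃ r : ℝ,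
      (∃ n m : ℕ, n - m > N ∧ m > N ∧ ∃ x0 : Euc k, x0 ≠ 0 ∧
        r = ((n : ℝ) - m)⁻¹ * Real.log (‖Phi B n 0 x0‖ / ‖Phi B m 0 x0‖)) ∧ r < -δ + e := by
    intro N e he
    set S : ℕ → Set ℝ := fun N => {r : ℝ | ∃ n m : ℕ, n - m > N ∧ m > N ∧ ∃ x0 : Euc k, x0 ≠ 0 ∧
        r = ((n : ℝ) - m)⁻¹ * Real.log (‖Phi B n 0 x0‖ / ‖Phi B m 0 x0‖)} with hS
    have hne : (S N).Nonempty := by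
      refine ⟨_, 2*N+2, N+1, by omega, by omega, z0, hz0, rfl⟩
    have hBohl' : (⨆ N, sInf (S N)) ≤ -δ := hBohl
    by_cases hb : BddAbove (Set.range fun N => sInf (S N))
    · have hle : sInf (S N) ≤ -δ := le_trans (le_ciSup hb N) hBohl'
      by_cases hbb : BddBelow (S N)
      · have hlt2 : sInf (S N) < -δ + e := by linarith
        obtain ⟨r, hrS, hrlt⟩ := exists_lt_of_csInf_lt hne hlt2
        exact ⟨r, hrS, hrlt⟩
      · obtain ⟨r, hrS, hrlt⟩ := (not_bddBelow_iff.mp hbb) (-δ + e)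
        exact ⟨r, hrS, hrlt⟩
    · exfalso
      rw [Real.iSup_of_not_bddAbove hb] at hBohl'
      linarith
  -- From this, find good pairs (τ, s)
  have key2 : ∀ N : ℕ, ∀ e : ℝ, 0 < e → ∃ p : ℕ × ℕ, N < p.1 ∧ N < p.2 - p.1 ∧
      ‖(Phi B p.1 p.2 : Euc k →L[ℝ] Euc k)‖⁻¹ ≤ Real.exp ((-δ + e) * ((p.2 : ℝ) - p.1)) := by
    intro N e he
    obtain ⟨r, ⟨n, m, h1, h2, x0, hx0, hr⟩, hlt⟩ := key N e he
    have hmn : m < n := by omega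
    refine ⟨(m, n), h2, h1, ?_⟩
    have hD : (0 : ℝ) < (n : ℝ) - m := by
      have := Nat.cast_lt (α := ℝ).mpr hmn
      linarith
    have hnum : (0 : ℝ) < ‖Phi B n 0 x0‖ := by
      rw [norm_pos_iff]; simp [hx0]
    have hden : (0 : ℝ) < ‖Phi B m 0 x0‖ := by
      rw [norm_pos_iff]; simp [hx0]
    have hratio : (0 : ℝ) < ‖Phi B n 0 x0‖ / ‖Phi B m 0 x0‖ := div_pos hnum hden
    have hlog : Real.log (‖Phi B n 0 x0‖ / ‖Phi B m 0 x0‖) < (-δ + e) * ((n : ℝ) - m) := by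
      have h1' : ((n : ℝ) - m) * r < ((n : ℝ) - m) * (-δ + e) :=
        (mul_lt_mul_iff_right₀ hD).mpr hlt
      rw [hr] at h1'
      rw [← mul_assoc, mul_inv_cancel₀ (ne_of_gt hD), one_mul] at h1'
      linarith [h1']
    have hratio_lt : ‖Phi B n 0 x0‖ / ‖Phi B m 0 x0‖ < Real.exp ((-δ + e) * ((n : ℝ) - m)) := by
      calc ‖Phi B n 0 x0‖ / ‖Phi B m 0 x0‖
          = Real.exp (Real.log (‖Phi B n 0 x0‖ / ‖Phi B m 0 x0‖)) := (Real.exp_log hratio).symm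
        _ < Real.exp ((-δ + e) * ((n : ℝ) - m)) := Real.exp_lt_exp.mpr hlog
    -- relate ratio to operator norm of the inverse transition
    set T := Phi B n m with hT
    set y := Phi B m 0 x0 with hy
    have hcc : Phi B n 0 x0 = T y := cocycle B (le_of_lt hmn) x0
    have hyle : ‖y‖ ≤ ‖(T.symm : Euc k →L[ℝ] Euc k)‖ * ‖T y‖ := by
      have : y = T.symm (T y) := by simp
      calc ‖y‖ = ‖T.symm (T y)‖ := by rw [← this]
        _ ≤ ‖(T.symm : Euc k →L[ℝ] Euc k)‖ * ‖T y‖ :=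
          (T.symm : Euc k →L[ℝ] Euc k).le_opNorm _
    have hTnorm : (0 : ℝ) < ‖(T.symm : Euc k →L[ℝ] Euc k)‖ := by
      by_contra h
      push_neg at h
      have h0 : ‖(T.symm : Euc k →L[ℝ] Euc k)‖ = 0 := le_antisymm h (norm_nonneg _)
      rw [h0, zero_mul] at hyle
      have : (0 : ℝ) < ‖y‖ := hden
      linarith
    have hinv : ‖(T.symm : Euc k →L[ℝ] Euc k)‖⁻¹ ≤ ‖T y‖ / ‖y‖ := by
      rw [le_div_iff₀ hden]
      calc ‖(T.symm : Euc k →L[ℝ] Euc k)‖⁻¹ * ‖y‖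
          ≤ ‖(T.symm : Euc k →L[ℝ] Euc k)‖⁻¹ * (‖(T.symm : Euc k →L[ℝ] Euc k)‖ * ‖T y‖) :=
            mul_le_mul_of_nonneg_left hyle (inv_nonneg.mpr (norm_nonneg _))
        _ = ‖T y‖ := by rw [← mul_assoc, inv_mul_cancel₀ (ne_of_gt hTnorm), one_mul]
    have hPhiSym : Phi B m n = T.symm := phi_symm B hmn
    rw [hPhiSym]
    calc ‖(T.symm : Euc k →L[ℝ] Euc k)‖⁻¹ ≤ ‖T y‖ / ‖y‖ := hinv
      _ = ‖Phi B n 0 x0‖ / ‖Phi B m 0 x0‖ := by rw [← hcc, ← hy]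
      _ ≤ Real.exp ((-δ + e) * ((n : ℝ) - m)) := le_of_lt hratio_lt
  -- Choose the pairs recursively
  have hF : ∀ ℓ prev : ℕ, ∃ p : ℕ × ℕ, Nbd ε ℓ prev < p.1 ∧ Nbd ε ℓ prev < p.2 - p.1 ∧
      ‖(Phi B p.1 p.2 : Euc k →L[ℝ] Euc k)‖⁻¹ ≤
        Real.exp ((-δ + ε ℓ) * ((p.2 : ℝ) - p.1)) :=
    fun ℓ prev => key2 (Nbd ε ℓ prev) (ε ℓ) (hpos ℓ)
  choose F hF1 hF2 hF3 using hF
  let g : ℕ → ℕ × ℕ := fun ℓ => Nat.rec (F 0 0) (fun j ih => F (j + 1) ih.2) ℓ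
  have hg0 : g 0 = F 0 0 := rfl
  have hgs : ∀ ℓ, g (ℓ + 1) = F (ℓ + 1) (g ℓ).2 := fun ℓ => rfl
  have hg : ∀ ℓ, ∃ p, g ℓ = F ℓ p := fun ℓ => by
    cases ℓ with
    | zero => exact ⟨0, rfl⟩
    | succ j => exact ⟨(g j).2, rfl⟩
  have hτs : ∀ ℓ, (g ℓ).1 < (g ℓ).2 := by
    intro ℓ
    obtain ⟨p, hp⟩ := hg ℓ
    have := hF2 ℓ p
    rw [← hp] at this
    omega
  have hsub : ∀ ℓ, ℓ < (g ℓ).2 - (g ℓ).1 ∧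
      ⌈Real.log (2 / Real.sin (ε ℓ)) / ε ℓ⌉₊ < (g ℓ).2 - (g ℓ).1 := by
    intro ℓ
    obtain ⟨p, hp⟩ := hg ℓ
    have h1 := hF2 ℓ p
    rw [← hp] at h1
    have h2 := Nbd_ell ε ℓ p
    have h3 := Nbd_ceil ε ℓ p
    omega
  refine ⟨fun ℓ => (g ℓ).2, fun ℓ => (g ℓ).1, ?_, ?_, ?_, ?_, ?_⟩
  · -- 2 ≤ τ 0
    show 2 ≤ (g 0).1
    have h1 := hF1 0 0
    have h2 := Nbd_two ε 0 0
    rw [← hg0] at h1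
    omega
  · -- τ ℓ < s ℓ < τ (ℓ+1)
    intro ℓ
    show (g ℓ).1 < (g ℓ).2 ∧ (g ℓ).2 < (g (ℓ + 1)).1
    refine ⟨hτs ℓ, ?_⟩
    have h1 := hF1 (ℓ + 1) (g ℓ).2
    rw [← hgs ℓ] at h1
    have h3 := Nbd_prev ε (ℓ + 1) (g ℓ).2
    omega
  · -- tendsto
    apply tendsto_atTop_mono (f := fun ℓ => ℓ)
    · intro ℓ
      show ℓ ≤ (g ℓ).2 - (g ℓ).1
      have := (hsub ℓ).1
      omega
    · exact tendsto_id
  · -- log condition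
    intro ℓ
    show (((g ℓ).2 : ℝ) - (g ℓ).1)⁻¹ * Real.log (2 / Real.sin (ε ℓ)) < ε ℓ
    have hlt := (hsub ℓ).2
    have hcast : ((g ℓ).2 : ℝ) - (g ℓ).1 = (((g ℓ).2 - (g ℓ).1 : ℕ) : ℝ) := by
      rw [Nat.cast_sub (le_of_lt (hτs ℓ))]
    have hD : (0 : ℝ) < ((g ℓ).2 : ℝ) - (g ℓ).1 := by
      have := Nat.cast_lt (α := ℝ).mpr (hτs ℓ)
      linarith
    have hgt : Real.log (2 / Real.sin (ε ℓ)) / ε ℓ < ((g ℓ).2 : ℝ) - (g ℓ).1 := by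
      calc Real.log (2 / Real.sin (ε ℓ)) / ε ℓ
          ≤ (⌈Real.log (2 / Real.sin (ε ℓ)) / ε ℓ⌉₊ : ℝ) := Nat.le_ceil _
        _ < (((g ℓ).2 - (g ℓ).1 : ℕ) : ℝ) := Nat.cast_lt.mpr hlt
        _ = ((g ℓ).2 : ℝ) - (g ℓ).1 := hcast.symm
    rw [inv_mul_lt_iff₀ hD]
    exact (div_lt_iff₀ (hpos ℓ)).mp hgt
  · -- main estimate
    intro ℓ
    show ‖(Phi B (g ℓ).1 (g ℓ).2 : Euc k →L[ℝ] Euc k)‖⁻¹ ≤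
      Real.exp ((-δ + ε ℓ) * (((g ℓ).2 : ℝ) - (g ℓ).1))
    obtain ⟨p, hp⟩ := hg ℓ
    have h3 := hF3 ℓ p
    rw [← hp] at h3
    exact h3
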